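/- The reduced pointed Σ-labelled rooted trees, equipped with pointed tree concatenation ∘, the domain operation D, and the constant given by the trivial tree, form the free algebra over Σ for the class of {∘, 1, D}-algebras of binary relations: for every set X, every set A of binary relations on X containing the identity relation and closed under relation composition and the domain operation, and every map g from Σ to A, there is a unique map h from the reduced pointed Σ-labelled rooted trees to A such that h(→a) = g(a) for all a ∈ Σ, h(trivial tree) = identity relation, h(T∘S) = h(T) composed with h(S), and h(D(T)) = domain of h(T). -/

import Mathlib

inductive PreTree (α : Type) : Type
  | node : Bool → List (α × PreTree α) → PreTree α

namespace PreTree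

variable {α : Type}

def mark : PreTree α → Bool
  | node b _ => b

def children : PreTree α → List (α × PreTree α)
  | node _ cs => cs

def le : PreTree α → PreTree α → Prop
  | node b₁ c₁, node b₂ c₂ =>
      (b₂ = true → b₁ = true) ∧
      ∀ q, q ∈ c₂ → ∃ p, p ∈ c₁ ∧ p.1 = q.1 ∧ le p.2 q.2
termination_by _ t₂ => sizeOf t₂
decreasing_by
  have h := List.sizeOf_lt_of_mem ‹q ∈ c₂›
  obtain ⟨qa, qt⟩ := q
  simp at h ⊢
  omega

-- The reduced form of a tree: reduce all child subtrees, then for each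
-- label keep only the `≤`-minimal attached subtrees.
open scoped Classical in
noncomputable def reduce : PreTree α → PreTree α
  | node b cs =>
      let cs' : List (α × PreTree α) := cs.attach.map fun p => (p.1.1, reduce p.1.2)
      node b (cs'.filter fun q =>
        decide (∀ q' ∈ cs', q'.1 = q.1 → le q'.2 q.2 → le q.2 q'.2))
termination_by t => sizeOf t
decreasing_by
  have h := List.sizeOf_lt_of_mem p.2
  obtain ⟨⟨pa, pt⟩, hp⟩ := p
  simp at h ⊢
  omega

/-- A tree is reduced if it equals its reduced form. -/
def Reduced (T : PreTree α) : Prop := reduce T = T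

/-- The number of marked (point) vertices of a tree. -/
def markCount : PreTree α → ℕ
  | node b cs => (cond b 1 0) + (cs.attach.map fun p => markCount p.1.2).sum
termination_by t => sizeOf t
decreasing_by
  have h := List.sizeOf_lt_of_mem p.2
  obtain ⟨⟨pa, pt⟩, hp⟩ := p
  simp at h ⊢
  omega

/-- A pointed tree: exactly one vertex is marked as the point. -/
def Pointed (T : PreTree α) : Prop := markCount T = 1

/-- Remove all point marks. -/
def unmark : PreTree α → PreTree α
  | node _ cs => node false (cs.attach.map fun p => (p.1.1, unmark p.1.2))
termination_by t => sizeOf t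
decreasing_by
  have h := List.sizeOf_lt_of_mem p.2
  obtain ⟨⟨pa, pt⟩, hp⟩ := p
  simp at h ⊢
  omega

/-- Graft the tree `S` onto the point of `T` (identifying the point of `T`
with the root of `S`); the marks of `S` determine the new point. -/
def graft (S : PreTree α) : PreTree α → PreTree α
  | node b cs =>
      if b then node S.mark (cs ++ S.children)
      else node b (cs.attach.map fun p => (p.1.1, graft S p.1.2))
termination_by t => sizeOf t
decreasing_by
  have h := List.sizeOf_lt_of_mem p.2
  obtain ⟨⟨pa, pt⟩, hp⟩ := p
  simp at h ⊢
  omega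

/-- Move the point of `T` to its root. -/
def pointAtRoot (T : PreTree α) : PreTree α := node true (unmark T).children

/-- Pointed tree concatenation `T ∘ S`. -/
noncomputable def concat (T S : PreTree α) : PreTree α := reduce (graft S T)

/-- The domain operation `D(T)` on pointed trees. -/
noncomputable def domTree (T : PreTree α) : PreTree α := reduce (pointAtRoot T)

/-- The trivial pointed tree: one vertex, both root and point. -/
def trivialTree : PreTree α := node true []

/-- The two-vertex pointed tree with a single `a`-labelled edge, point at the child. -/
def arrow (a : α) : PreTree α := node false [(a, node true [])]


/-- Set-theoretic equality of trees (children lists regarded as sets). -/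
def eqv : PreTree α → PreTree α → Prop
  | node b₁ c₁, node b₂ c₂ =>
      b₁ = b₂ ∧
      (∀ p, p ∈ c₁ → ∃ q, q ∈ c₂ ∧ p.1 = q.1 ∧ eqv p.2 q.2) ∧
      (∀ q, q ∈ c₂ → ∃ p : {x // x ∈ c₁}, p.1.1 = q.1 ∧ eqv p.1.2 q.2)
termination_by t₁ _ => sizeOf t₁
decreasing_by
  · have h₁ := List.sizeOf_lt_of_mem ‹p ∈ c₁›
    obtain ⟨pa, pt⟩ := p
    simp at h₁ ⊢
    omega
  · have h₁ := List.sizeOf_lt_of_mem p.2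
    obtain ⟨⟨pa, pt⟩, hp⟩ := p
    simp at h₁ ⊢
    omega


/-- The subtree of `T` at position `p` (a list of child indices), if it exists. -/
def subAt : List ℕ → PreTree α → Option (PreTree α)
  | [], t => some t
  | i :: is, node _ cs => (cs[i]?).bind fun p => subAt is p.2

/-- `p` is a vertex of `T`. -/
def IsVertex (T : PreTree α) (p : List ℕ) : Prop := ∃ t, subAt p T = some t

/-- The vertex `p` of `T` is the point (is marked). -/
def IsPoint (T : PreTree α) (p : List ℕ) : Prop :=
  ∃ t, subAt p T = some t ∧ t.mark = true

/-- There is an `a`-labelled edge of `T` from vertex `p` (the parent) to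
vertex `q` (the child). -/
def Edge (T : PreTree α) (a : α) (p q : List ℕ) : Prop :=
  ∃ c, subAt p T = some c ∧ ∃ i t, c.children[i]? = some (a, t) ∧ q = p ++ [i]

theorem root_isVertex (T : PreTree α) : IsVertex T [] := ⟨T, rfl⟩

/-- A homomorphism of pointed labelled rooted trees from `S` to `T`:
a map of vertices preserving the labelled edge relations, sending the root
to the root and points to points. -/
def HomTree (S T : PreTree α) : Prop :=
  ∃ θ : List ℕ → List ℕ,
    θ [] = [] ∧
    (∀ p, IsVertex S p → IsVertex T (θ p)) ∧
    (∀ a p q, Edge S a p q → Edge T a (θ p) (θ q)) ∧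
    (∀ p, IsPoint S p → IsPoint T (θ p))

/-- A homomorphism of the pointed tree `T`, viewed as a relational structure,
into the relational structure `(X, f)`, mapping the root of `T` to `x` and
the point of `T` to `y`. -/
def HomInto {X : Type} (T : PreTree α) (f : α → X → X → Prop) (x y : X) : Prop :=
  ∃ θ : List ℕ → X,
    θ [] = x ∧
    (∀ a p q, Edge T a p q → f a (θ p) (θ q)) ∧
    (∀ p, IsPoint T p → θ p = y)


end PreTree

namespace FreeKAD

/-- Terms of the signature `{∘, 1, D}`. -/
inductive Term1 (α : Type) : Type
  | var : α → Term1 α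
  | one : Term1 α
  | comp : Term1 α → Term1 α → Term1 α
  | dom : Term1 α → Term1 α

/-- Terms of the signature `{∘, +, *, 0, 1, D}` (Kleene algebra with domain). -/
inductive TermK (α : Type) : Type
  | var : α → TermK α
  | zero : TermK α
  | one : TermK α
  | comp : TermK α → TermK α → TermK α
  | add : TermK α → TermK α → TermK α
  | star : TermK α → TermK α
  | dom : TermK α → TermK α

variable {α : Type}

/-- The relational interpretation of a `{∘, 1, D}`-term over a set `X`,
under an assignment `f` of binary relations on `X` to the variables. -/
def rinterp1 {X : Type} (f : α → X → X → Prop) : Term1 α → X → X → Prop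
  | .var a => f a
  | .one => fun x y => x = y
  | .comp s t => fun x y => ∃ z, rinterp1 f s x z ∧ rinterp1 f t z y
  | .dom s => fun x y => x = y ∧ ∃ z, rinterp1 f s x z

/-- The relational interpretation of a `{∘, +, *, 0, 1, D}`-term over a set `X`,
under an assignment `f` of binary relations on `X` to the variables. -/
def rinterpK {X : Type} (f : α → X → X → Prop) : TermK α → X → X → Prop
  | .var a => f a
  | .zero => fun _ _ => False
  | .one => fun x y => x = y
  | .comp s t => fun x y => ∃ z, rinterpK f s x z ∧ rinterpK f t z y
  | .add s t => fun x y => rinterpK f s x y ∨ rinterpK f t x y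
  | .star s => Relation.ReflTransGen (rinterpK f s)
  | .dom s => fun x y => x = y ∧ ∃ z, rinterpK f s x z

/-- Composition of binary relations. -/
def relComp {X : Type} (R S : X → X → Prop) : X → X → Prop :=
  fun x y => ∃ z, R x z ∧ S z y

/-- Union of binary relations. -/
def relUnion {X : Type} (R S : X → X → Prop) : X → X → Prop :=
  fun x y => R x y ∨ S x y

/-- The domain operation on binary relations. -/
def relDom {X : Type} (R : X → X → Prop) : X → X → Prop :=
  fun x y => x = y ∧ ∃ z, R x z

/-- The identity relation. -/
def relId {X : Type} : X → X → Prop := fun x y => x = y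

/-- The empty relation. -/
def relEmpty {X : Type} : X → X → Prop := fun _ _ => False

end FreeKAD

namespace FreeKAD

open PreTree

variable {α : Type}

/-- The single-tree interpretation of `{∘, 1, D}`-terms. -/
noncomputable def interp1 : Term1 α → PreTree α
  | .var a => arrow a
  | .one => trivialTree
  | .comp s t => concat (interp1 s) (interp1 t)
  | .dom s => domTree (interp1 s)

/-- The set of `≤`-maximal elements of a set of trees. -/
def maximalSet (K : Set (PreTree α)) : Set (PreTree α) :=
  {T | T ∈ K ∧ ∀ S ∈ K, le T S → le S T}

/-- Elementwise lifting of pointed tree concatenation to sets of trees. -/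
def liftComp (K L : Set (PreTree α)) : Set (PreTree α) :=
  {U | ∃ T ∈ K, ∃ S ∈ L, U = concat T S}

/-- Elementwise lifting of the domain operation to sets of trees. -/
def liftDom (K : Set (PreTree α)) : Set (PreTree α) :=
  {U | ∃ T ∈ K, U = domTree T}

/-- Iterated lifted concatenation: `K^0 = {trivial}`, `K^(i+1) = K^i ∘ K`. -/
def powC (K : Set (PreTree α)) : ℕ → Set (PreTree α)
  | 0 => {trivialTree}
  | i + 1 => liftComp (powC K i) K

/-- The standard tree interpretation of `{∘, +, *, 0, 1, D}`-terms. -/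
def sinterp : TermK α → Set (PreTree α)
  | .var a => {arrow a}
  | .zero => ∅
  | .one => {trivialTree}
  | .comp s t => maximalSet (liftComp (sinterp s) (sinterp t))
  | .add s t => maximalSet (sinterp s ∪ sinterp t)
  | .star s => maximalSet (⋃ i : ℕ, powC (sinterp s) (i + 1))
  | .dom s => maximalSet (liftDom (sinterp s))

/-- Equality of sets of trees, with trees compared as (hereditarily finite) sets. -/
def SetEqv (K L : Set (PreTree α)) : Prop :=
  (∀ T ∈ K, ∃ S ∈ L, eqv T S) ∧ (∀ S ∈ L, ∃ T ∈ K, eqv T S)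

/-- A set of reduced pointed trees is regular if it is the standard tree
interpretation of some `{∘, +, *, 0, 1, D}`-term. -/
def Regular (L : Set (PreTree α)) : Prop := ∃ t : TermK α, L = sinterp t

/-- The set of reduced trees lying `≤`-below some member of `L`. -/
def down (L : Set (PreTree α)) : Set (PreTree α) :=
  {T | Reduced T ∧ ∃ S ∈ L, le T S}

end FreeKAD

namespace FreeKAD
open PreTree

/-- Reduced pointed `Σ`-labelled rooted trees. -/
def RPTree (α : Type) : Type := {T : PreTree α // T.Reduced ∧ T.Pointed}

end FreeKAD

namespace PreTree
variable {α : Type} {X : Type}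

theorem strongRecOn {motive : PreTree α → Prop}
    (h : ∀ b cs, (∀ p ∈ cs, motive (Prod.snd p)) → motive (node b cs)) : ∀ t, motive t
  | node b cs => h b cs (fun p _ => strongRecOn h p.2)
termination_by t => sizeOf t
decreasing_by
  have h' := List.sizeOf_lt_of_mem ‹p ∈ cs›
  obtain ⟨pa, pt⟩ := p
  simp at h' ⊢
  omega

theorem amap (cs : List (α × PreTree α)) (F : PreTree α → PreTree α) :
    (cs.attach.map fun p => (p.1.1, F p.1.2)) = cs.map fun p => (p.1, F p.2) := by
  rw [← List.attach_map_val (l := cs) (f := fun p => (p.1, F p.2))]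

theorem le_refl : ∀ t : PreTree α, le t t := by
  intro t
  induction t using strongRecOn with
  | h b cs ih =>
    rw [le]
    exact ⟨fun h => h, fun q hq => ⟨q, hq, rfl, ih q hq⟩⟩

theorem le_trans : ∀ t u v : PreTree α, le t u → le u v → le t v := by
  intro t u v
  induction v using strongRecOn generalizing t u with
  | h b cs ih =>
    obtain ⟨b₁, c₁⟩ := t; obtain ⟨b₂, c₂⟩ := u
    rw [le, le, le]
    rintro ⟨hm₁, hc₁⟩ ⟨hm₂, hc₂⟩
    refine ⟨fun h => hm₁ (hm₂ h), fun q hq => ?_⟩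
    obtain ⟨p, hp, hl, hle⟩ := hc₂ q hq
    obtain ⟨r, hr, hl', hle'⟩ := hc₁ p hp
    exact ⟨r, hr, hl'.trans hl, ih q hq r.2 p.2 hle' hle⟩

theorem eqv_refl : ∀ t : PreTree α, eqv t t := by
  intro t
  induction t using strongRecOn with
  | h b cs ih =>
    rw [eqv]
    exact ⟨rfl, fun p hp => ⟨p, hp, rfl, ih p hp⟩,
      fun q hq => ⟨⟨q, hq⟩, rfl, ih q hq⟩⟩

theorem eqv_of_mem_iff {b₁ b₂ : Bool} {c₁ c₂ : List (α × PreTree α)} (hb : b₁ = b₂)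
    (h : ∀ x, x ∈ c₁ ↔ x ∈ c₂) : eqv (node b₁ c₁) (node b₂ c₂) := by
  rw [eqv]
  exact ⟨hb, fun p hp => ⟨p, (h p).1 hp, rfl, eqv_refl _⟩,
    fun q hq => ⟨⟨q, (h q).2 hq⟩, rfl, eqv_refl _⟩⟩

theorem markCount_node (b : Bool) (cs : List (α × PreTree α)) :
    markCount (node b cs) = (cond b 1 0) + (cs.map fun p => markCount p.2).sum := by
  rw [markCount]
  congr 1
  rw [← List.attach_map_val (l := cs) (f := fun p => markCount p.2)]

theorem unmark_node (b : Bool) (cs : List (α × PreTree α)) :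
    unmark (node b cs) = node false (cs.map fun p => (p.1, unmark p.2)) := by
  rw [unmark, amap]

theorem graft_node_true (S : PreTree α) (cs : List (α × PreTree α)) :
    graft S (node true cs) = node S.mark (cs ++ S.children) := by
  rw [graft]; simp

theorem graft_node_false (S : PreTree α) (cs : List (α × PreTree α)) :
    graft S (node false cs) = node false (cs.map fun p => (p.1, graft S p.2)) := by
  rw [graft]; simp [amap]

/-- The filter condition in `reduce`. -/
def keep (cs : List (α × PreTree α)) (q : α × PreTree α) : Prop :=
  ∀ q' ∈ cs, q'.1 = q.1 → le q'.2 q.2 → le q.2 q'.2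

open scoped Classical in
theorem reduce_node (b : Bool) (cs : List (α × PreTree α)) :
    reduce (node b cs) = node b (((cs.map fun p => (p.1, reduce p.2))).filter
      fun q => decide (keep (cs.map fun p => (p.1, reduce p.2)) q)) := by
  rw [reduce]
  simp only [amap]
  congr 1
  exact List.filter_congr (fun q _ => decide_eq_decide.mpr Iff.rfl)

end PreTree

namespace PreTree
variable {α : Type} {X : Type}

theorem mc_zero_children {b : Bool} {cs : List (α × PreTree α)}
    (h : markCount (node b cs) = 0) : b = false ∧ ∀ p ∈ cs, markCount p.2 = 0 := by
  rw [markCount_node] at h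
  have hb : b = false := by cases b <;> simp_all
  subst hb
  simp only [cond_false, Nat.zero_add] at h
  refine ⟨rfl, fun p hp => ?_⟩
  exact List.sum_eq_zero_iff.mp h (markCount p.2) (List.mem_map.mpr ⟨p, hp, rfl⟩)

theorem unmark_eq_self : ∀ t : PreTree α, markCount t = 0 → unmark t = t := by
  intro t
  induction t using strongRecOn with
  | h b cs ih =>
    intro h
    obtain ⟨hb, hc⟩ := mc_zero_children h
    subst hb
    rw [unmark_node]
    congr 1
    conv_rhs => rw [← List.map_id cs]
    exact List.map_congr_left (fun p hp => by simp [ih p hp (hc p hp)])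

theorem graft_eq_self (S : PreTree α) : ∀ t : PreTree α, markCount t = 0 → graft S t = t := by
  intro t
  induction t using strongRecOn with
  | h b cs ih =>
    intro h
    obtain ⟨hb, hc⟩ := mc_zero_children h
    subst hb
    rw [graft_node_false]
    congr 1
    conv_rhs => rw [← List.map_id cs]
    exact List.map_congr_left (fun p hp => by simp [ih p hp (hc p hp)])

theorem graft_point (S : PreTree α) : graft S (node true []) = S := by
  rw [graft_node_true]
  obtain ⟨b, cs⟩ := S
  simp [mark, children]

/-- All-vertices satisfaction with a predicate at the marked vertices. -/
def SatP (f : α → X → X → Prop) : PreTree α → X → (X → Prop) → Prop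
  | node b cs, x, P => (b = true → P x) ∧ ∀ p ∈ cs, ∃ z, f p.1 x z ∧ SatP f p.2 z P
termination_by t _ _ => sizeOf t
decreasing_by
  have h := List.sizeOf_lt_of_mem ‹p ∈ cs›
  obtain ⟨pa, pt⟩ := p
  simp at h ⊢
  omega

theorem SatP_node (f : α → X → X → Prop) (b : Bool) (cs : List (α × PreTree α)) (x : X)
    (P : X → Prop) : SatP f (node b cs) x P ↔
      ((b = true → P x) ∧ ∀ p ∈ cs, ∃ z, f p.1 x z ∧ SatP f p.2 z P) := by
  rw [SatP]

/-- On a tree with no marks, `SatP` does not depend on the predicate. -/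
theorem satP_congr (f : α → X → X → Prop) :
    ∀ t : PreTree α, markCount t = 0 → ∀ x (P Q : X → Prop),
      SatP f t x P → SatP f t x Q := by
  intro t
  induction t using strongRecOn with
  | h b cs ih =>
    intro h x P Q hs
    obtain ⟨hb, hc⟩ := mc_zero_children h
    subst hb
    rw [SatP_node] at hs ⊢
    refine ⟨by simp, fun p hp => ?_⟩
    obtain ⟨z, hz, hsp⟩ := hs.2 p hp
    exact ⟨z, hz, ih p hp (hc p hp) z P Q hsp⟩

/-- `SatP` is antitone along `le`. -/
theorem satP_of_le (f : α → X → X → Prop) :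
    ∀ (B A : PreTree α), le A B → ∀ x P, SatP f A x P → SatP f B x P := by
  intro B
  induction B using strongRecOn with
  | h b cs ih =>
    rintro ⟨b₁, c₁⟩ hle x P hs
    rw [le] at hle
    rw [SatP_node] at hs ⊢
    refine ⟨fun hb => hs.1 (hle.1 hb), fun q hq => ?_⟩
    obtain ⟨p, hp, hlbl, hlep⟩ := hle.2 q hq
    obtain ⟨z, hz, hsp⟩ := hs.2 p hp
    rw [hlbl] at hz
    exact ⟨z, hz, ih q hq p.2 hlep z P hsp⟩

end PreTree

namespace PreTree
variable {α : Type} {X : Type}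

theorem filter_length_le {β : Type*} {P Q : β → Bool} :
    ∀ l : List β, (∀ x ∈ l, P x = true → Q x = true) →
      (l.filter P).length ≤ (l.filter Q).length := by
  intro l
  induction l with
  | nil => simp
  | cons a t ih =>
    intro h
    have ht := ih (fun x hx => h x (List.mem_cons_of_mem a hx))
    by_cases hPa : P a = true
    · have hQa := h a (List.mem_cons_self (a := a) (l := t)) hPa
      simp [List.filter_cons, hPa, hQa]
      omega
    · simp only [Bool.not_eq_true] at hPa
      rw [List.filter_cons, List.filter_cons, hPa]
      cases hQa : Q a <;> simp <;> omega

theorem filter_length_lt {β : Type*} {P Q : β → Bool} :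
    ∀ l : List β, (∀ x ∈ l, P x = true → Q x = true) →
      ∀ r ∈ l, Q r = true → P r = false →
      (l.filter P).length < (l.filter Q).length := by
  intro l
  induction l with
  | nil => simp
  | cons a t ih =>
    intro h r hr hQ hP
    have hmono := filter_length_le t (fun x hx => h x (List.mem_cons_of_mem a hx))
    rcases List.mem_cons.mp hr with rfl | hrt
    · rw [List.filter_cons, List.filter_cons, hP, hQ]
      simp
      omega
    · have hlt := ih (fun x hx => h x (List.mem_cons_of_mem a hx)) r hrt hQ hP
      rw [List.filter_cons, List.filter_cons]
      by_cases hPa : P a = true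
      · have hQa := h a (List.mem_cons_self (a := a) (l := t)) hPa
        simp [hPa, hQa]; omega
      · simp only [Bool.not_eq_true] at hPa
        rw [hPa]
        cases hQa : Q a <;> simp <;> omega

/-- The strict domination relation used for finding minimal children. -/
def Strict (r p : α × PreTree α) : Prop := r.1 = p.1 ∧ le r.2 p.2 ∧ ¬ le p.2 r.2

open scoped Classical in
theorem exists_keep (l : List (α × PreTree α)) :
    ∀ (n : ℕ) (p : α × PreTree α),
      (l.filter fun r => decide (Strict r p)).length ≤ n → p ∈ l →
      ∃ q ∈ l, q.1 = p.1 ∧ le q.2 p.2 ∧ keep l q := by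
  intro n
  induction n with
  | zero =>
    intro p hn hp
    by_cases hk : keep l p
    · exact ⟨p, hp, rfl, le_refl _, hk⟩
    · exfalso
      simp only [keep, not_forall] at hk
      obtain ⟨r, hr, hlbl, hler, hnle⟩ := hk
      have hmem : r ∈ l.filter fun r' => decide (Strict r' p) :=
        List.mem_filter.mpr ⟨hr, by simp [Strict, hlbl, hler, hnle]⟩
      have := List.length_pos_iff.mpr (List.ne_nil_of_mem hmem)
      omega
  | succ n ih =>
    intro p hn hp
    by_cases hk : keep l p
    · exact ⟨p, hp, rfl, le_refl _, hk⟩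
    · simp only [keep, not_forall] at hk
      obtain ⟨r, hr, hlbl, hler, hnle⟩ := hk
      have himp : ∀ x ∈ l, decide (Strict x r) = true → decide (Strict x p) = true := by
        intro x _ hx
        rw [decide_eq_true_eq] at hx ⊢
        obtain ⟨h1, h2, h3⟩ := hx
        refine ⟨h1.trans hlbl, le_trans _ _ _ h2 hler, fun hcon => ?_⟩
        exact hnle (le_trans _ _ _ hcon h2)
      have hQr : decide (Strict r p) = true := by
        rw [decide_eq_true_eq]; exact ⟨hlbl, hler, hnle⟩
      have hPr : decide (Strict r r) = false := by
        rw [decide_eq_false_iff_not]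
        exact fun h => h.2.2 (le_refl _)
      have hlt := filter_length_lt l himp r hr hQr hPr
      obtain ⟨q, hq, h1, h2, h3⟩ := ih r (by omega) hr
      exact ⟨q, hq, h1.trans hlbl, le_trans _ _ _ h2 hler, h3⟩

theorem satP_reduce (f : α → X → X → Prop) :
    ∀ t : PreTree α, ∀ x P, SatP f (reduce t) x P ↔ SatP f t x P := by
  classical
  intro t
  induction t using strongRecOn with
  | h b cs ih =>
    intro x P
    rw [reduce_node]
    set L := cs.map fun p => (p.1, reduce p.2) with hL
    constructor
    · intro hs
      rw [SatP_node] at hs ⊢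
      refine ⟨hs.1, fun p hp => ?_⟩
      have hpL : (p.1, reduce p.2) ∈ L := List.mem_map.mpr ⟨p, hp, rfl⟩
      obtain ⟨q, hqL, hlbl, hleq, hkeep⟩ := exists_keep L
        ((L.filter fun r => decide (Strict r (p.1, reduce p.2))).length) _ Nat.le.refl hpL
      have hqf : q ∈ L.filter fun q => decide (keep L q) :=
        List.mem_filter.mpr ⟨hqL, by simpa using hkeep⟩
      obtain ⟨z, hz, hsq⟩ := hs.2 q hqf
      rw [hlbl] at hz
      have := satP_of_le f (reduce p.2) q.2 hleq z P hsq
      exact ⟨z, hz, (ih p hp z P).mp this⟩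
    · intro hs
      rw [SatP_node] at hs ⊢
      refine ⟨hs.1, fun q hq => ?_⟩
      have hqL := (List.mem_filter.mp hq).1
      obtain ⟨p, hp, rfl⟩ := List.mem_map.mp hqL
      obtain ⟨z, hz, hsp⟩ := hs.2 p hp
      exact ⟨z, hz, (ih p hp z P).mpr hsp⟩

theorem satP_eqv (f : α → X → X → Prop) :
    ∀ t s : PreTree α, eqv t s → ∀ x P, SatP f t x P ↔ SatP f s x P := by
  intro t
  induction t using strongRecOn with
  | h b cs ih =>
    rintro ⟨b₂, c₂⟩ he x P
    rw [eqv] at he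
    obtain ⟨hb, hfwd, hbwd⟩ := he
    subst hb
    constructor
    · intro hs
      rw [SatP_node] at hs ⊢
      refine ⟨hs.1, fun q hq => ?_⟩
      obtain ⟨⟨p, hp⟩, hlbl, heqv⟩ := hbwd q hq
      obtain ⟨z, hz, hsp⟩ := hs.2 p hp
      rw [hlbl] at hz
      exact ⟨z, hz, (ih p hp q.2 heqv z P).mp hsp⟩
    · intro hs
      rw [SatP_node] at hs ⊢
      refine ⟨hs.1, fun p hp => ?_⟩
      obtain ⟨q, hq, hlbl, heqv⟩ := hfwd p hp
      obtain ⟨z, hz, hsq⟩ := hs.2 q hq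
      rw [← hlbl] at hz
      exact ⟨z, hz, (ih p hp q.2 heqv z P).mpr hsq⟩

end PreTree

namespace PreTree
variable {α : Type} {X : Type}

theorem sum_eq_one_split {l : List (α × PreTree α)}
    (h : (l.map fun p => markCount p.2).sum = 1) :
    ∃ l₁ p l₂, l = l₁ ++ p :: l₂ ∧ markCount p.2 = 1 ∧
      (∀ x ∈ l₁, markCount x.2 = 0) ∧ (∀ x ∈ l₂, markCount x.2 = 0) := by
  induction l with
  | nil => simp at h
  | cons a t ih =>
    rw [List.map_cons, List.sum_cons] at h
    have hc : (markCount a.2 = 0 ∧ (t.map fun p => markCount p.2).sum = 1) ∨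
        (markCount a.2 = 1 ∧ (t.map fun p => markCount p.2).sum = 0) := by omega
    rcases hc with ⟨h0, h1⟩ | ⟨h1, h0⟩
    · obtain ⟨l₁, p, l₂, rfl, hp, hl₁, hl₂⟩ := ih h1
      exact ⟨a :: l₁, p, l₂, rfl, hp, fun x hx => by
        rcases List.mem_cons.mp hx with rfl | hx
        · exact h0
        · exact hl₁ x hx, hl₂⟩
    · refine ⟨[], a, t, rfl, h1, by simp, fun x hx => ?_⟩
      exact List.sum_eq_zero_iff.mp h0 _ (List.mem_map.mpr ⟨x, hx, rfl⟩)

theorem pointed_node_false {cs : List (α × PreTree α)}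
    (h : markCount (node false cs) = 1) :
    ∃ p₀ ∈ cs, markCount p₀.2 = 1 ∧ ∀ p ∈ cs, p = p₀ ∨ markCount p.2 = 0 := by
  rw [markCount_node] at h
  simp only [cond_false, Nat.zero_add] at h
  obtain ⟨l₁, p₀, l₂, rfl, hp, hl₁, hl₂⟩ := sum_eq_one_split h
  refine ⟨p₀, by simp, hp, fun p hmem => ?_⟩
  rcases List.mem_append.mp hmem with h1 | h2
  · exact Or.inr (hl₁ p h1)
  · rcases List.mem_cons.mp h2 with rfl | h3
    · exact Or.inl rfl
    · exact Or.inr (hl₂ p h3)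

theorem pointed_node_true {cs : List (α × PreTree α)}
    (h : markCount (node true cs) = 1) : ∀ p ∈ cs, markCount p.2 = 0 := by
  rw [markCount_node] at h
  simp only [cond_true] at h
  have hsum : (cs.map fun p => markCount p.2).sum = 0 := by omega
  intro p hp
  exact List.sum_eq_zero_iff.mp hsum (markCount p.2) (List.mem_map.mpr ⟨p, hp, rfl⟩)

theorem satP_trivial (f : α → X → X → Prop) (x : X) (P : X → Prop) :
    SatP f (node true []) x P ↔ P x := by
  rw [SatP_node]; simp

theorem satP_arrow (f : α → X → X → Prop) (a : α) (x : X) (P : X → Prop) :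
    SatP f (arrow a) x P ↔ ∃ z, f a x z ∧ P z := by
  rw [arrow, SatP_node]
  simp [satP_trivial]

theorem satP_graft (f : α → X → X → Prop) (S : PreTree α) :
    ∀ t : PreTree α, markCount t ≤ 1 → ∀ x P,
      SatP f (graft S t) x P ↔ SatP f t x (fun z => SatP f S z P) := by
  intro t
  induction t using strongRecOn with
  | h b cs ih =>
    intro hmc x P
    cases b with
    | true =>
      rw [markCount_node] at hmc
      simp only [cond_true] at hmc
      have hsum : (cs.map fun p => markCount p.2).sum = 0 := by omega
      have hz : ∀ p ∈ cs, markCount p.2 = 0 := fun p hp =>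
        List.sum_eq_zero_iff.mp hsum (markCount p.2) (List.mem_map.mpr ⟨p, hp, rfl⟩)
      obtain ⟨sb, scs⟩ := S
      rw [graft_node_true, SatP_node, SatP_node]
      simp only [mark, children]
      constructor
      · rintro ⟨hm, hc⟩
        refine ⟨fun _ => ?_, fun p hp => ?_⟩
        · rw [SatP_node]
          exact ⟨hm, fun p hp => hc p (List.mem_append.mpr (Or.inr hp))⟩
        · obtain ⟨z, hfz, hsp⟩ := hc p (List.mem_append.mpr (Or.inl hp))
          exact ⟨z, hfz, satP_congr f p.2 (hz p hp) z _ _ hsp⟩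
      · rintro ⟨hm, hc⟩
        have hS := hm (by trivial)
        rw [SatP_node] at hS
        refine ⟨hS.1, fun p hp => ?_⟩
        rcases List.mem_append.mp hp with h1 | h2
        · obtain ⟨z, hfz, hsp⟩ := hc p h1
          exact ⟨z, hfz, satP_congr f p.2 (hz p h1) z _ _ hsp⟩
        · exact hS.2 p h2
    | false =>
      rw [markCount_node] at hmc
      simp only [cond_false, Nat.zero_add] at hmc
      have hle : ∀ p ∈ cs, markCount p.2 ≤ 1 := by
        intro p hp
        have hmem : markCount p.2 ∈ cs.map fun p => markCount p.2 :=
          List.mem_map.mpr ⟨p, hp, rfl⟩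
        have := List.single_le_sum (fun (x : ℕ) _ => Nat.zero_le x) _ hmem
        omega
      rw [graft_node_false, SatP_node, SatP_node]
      constructor
      · rintro ⟨_, hc⟩
        refine ⟨by simp, fun p hp => ?_⟩
        obtain ⟨z, hfz, hsp⟩ := hc (p.1, graft S p.2) (List.mem_map.mpr ⟨p, hp, rfl⟩)
        exact ⟨z, hfz, (ih p hp (hle p hp) z P).mp hsp⟩
      · rintro ⟨_, hc⟩
        refine ⟨by simp, fun q hq => ?_⟩
        obtain ⟨p, hp, rfl⟩ := List.mem_map.mp hq
        obtain ⟨z, hfz, hsp⟩ := hc p hp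
        exact ⟨z, hfz, (ih p hp (hle p hp) z P).mpr hsp⟩

theorem satP_point (f : α → X → X → Prop) :
    ∀ t : PreTree α, markCount t = 1 → ∀ x P,
      SatP f t x P ↔ ∃ z, SatP f t x (fun w => w = z) ∧ P z := by
  intro t
  induction t using strongRecOn with
  | h b cs ih =>
    intro hmc x P
    cases b with
    | true =>
      have hz := pointed_node_true hmc
      rw [SatP_node]
      constructor
      · rintro ⟨hm, hc⟩
        refine ⟨x, ?_, hm rfl⟩
        rw [SatP_node]
        refine ⟨fun _ => rfl, fun p hp => ?_⟩
        obtain ⟨z, hfz, hsp⟩ := hc p hp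
        exact ⟨z, hfz, satP_congr f p.2 (hz p hp) z _ _ hsp⟩
      · rintro ⟨z, hsz, hPz⟩
        rw [SatP_node] at hsz
        have hxz : x = z := hsz.1 rfl
        refine ⟨fun _ => hxz ▸ hPz, fun p hp => ?_⟩
        obtain ⟨w, hfw, hsp⟩ := hsz.2 p hp
        exact ⟨w, hfw, satP_congr f p.2 (hz p hp) w _ _ hsp⟩
    | false =>
      obtain ⟨p₀, hp₀, hmc₀, hothers⟩ := pointed_node_false hmc
      rw [SatP_node]
      constructor
      · rintro ⟨_, hc⟩
        obtain ⟨z₀, hfz₀, hsp₀⟩ := hc p₀ hp₀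
        obtain ⟨w, hsw, hPw⟩ := (ih p₀ hp₀ hmc₀ z₀ P).mp hsp₀
        refine ⟨w, ?_, hPw⟩
        rw [SatP_node]
        refine ⟨by simp, fun p hp => ?_⟩
        rcases hothers p hp with rfl | h0
        · exact ⟨z₀, hfz₀, hsw⟩
        · obtain ⟨z, hfz, hsp⟩ := hc p hp
          exact ⟨z, hfz, satP_congr f p.2 h0 z _ _ hsp⟩
      · rintro ⟨z, hsz, hPz⟩
        rw [SatP_node] at hsz
        refine ⟨by simp, fun p hp => ?_⟩
        obtain ⟨w, hfw, hsp⟩ := hsz.2 p hp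
        rcases hothers p hp with rfl | h0
        · exact ⟨w, hfw, (ih p hp hmc₀ w P).mpr ⟨z, hsp, hPz⟩⟩
        · exact ⟨w, hfw, satP_congr f p.2 h0 w _ _ hsp⟩

theorem satP_unmark (f : α → X → X → Prop) :
    ∀ t : PreTree α, ∀ x (P : X → Prop),
      SatP f (unmark t) x P ↔ SatP f t x (fun _ => True) := by
  intro t
  induction t using strongRecOn with
  | h b cs ih =>
    intro x P
    rw [unmark_node, SatP_node, SatP_node]
    constructor
    · rintro ⟨_, hc⟩
      refine ⟨by simp, fun p hp => ?_⟩
      obtain ⟨z, hfz, hsp⟩ := hc (p.1, unmark p.2) (List.mem_map.mpr ⟨p, hp, rfl⟩)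
      exact ⟨z, hfz, (ih p hp z P).mp hsp⟩
    · rintro ⟨_, hc⟩
      refine ⟨by simp, fun q hq => ?_⟩
      obtain ⟨p, hp, rfl⟩ := List.mem_map.mp hq
      obtain ⟨z, hfz, hsp⟩ := hc p hp
      exact ⟨z, hfz, (ih p hp z P).mpr hsp⟩

theorem satP_pointAtRoot (f : α → X → X → Prop) (t : PreTree α) (hmc : markCount t = 1)
    (x : X) (P : X → Prop) :
    SatP f (pointAtRoot t) x P ↔ P x ∧ ∃ z, SatP f t x (fun w => w = z) := by
  obtain ⟨b, cs⟩ := t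
  rw [pointAtRoot, unmark_node]
  simp only [children]
  rw [SatP_node]
  have hch : (∀ q ∈ cs.map fun p => (p.1, unmark p.2), ∃ z, f q.1 x z ∧ SatP f q.2 z P) ↔
      SatP f (unmark (node b cs)) x P := by
    rw [unmark_node, SatP_node]
    simp
  constructor
  · rintro ⟨hm, hc⟩
    have h1 := (satP_unmark f (node b cs) x P).mp (hch.mp hc)
    have h2 := (satP_point f (node b cs) hmc x (fun _ => True)).mp h1
    obtain ⟨z, hz, _⟩ := h2
    exact ⟨hm rfl, z, hz⟩
  · rintro ⟨hPx, z, hz⟩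
    have h1 : SatP f (node b cs) x (fun _ => True) :=
      (satP_point f (node b cs) hmc x (fun _ => True)).mpr ⟨z, hz, trivial⟩
    exact ⟨fun _ => hPx, hch.mpr ((satP_unmark f (node b cs) x P).mpr h1)⟩

end PreTree

namespace PreTree
variable {α : Type}

theorem reduce_reduce : ∀ t : PreTree α, reduce (reduce t) = reduce t := by
  classical
  intro t
  induction t using strongRecOn with
  | h b cs ih =>
    rw [reduce_node]
    set L := cs.map fun p => (p.1, reduce p.2) with hL
    set K := L.filter fun q => decide (keep L q) with hK
    rw [reduce_node]
    have hmem : ∀ q ∈ K, q ∈ L := fun q hq => (List.mem_filter.mp hq).1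
    have hred : ∀ q ∈ K, reduce q.2 = q.2 := by
      intro q hq
      obtain ⟨p, hp, rfl⟩ := List.mem_map.mp (hmem q hq)
      exact ih p hp
    have hmapK : (K.map fun p => (p.1, reduce p.2)) = K := by
      conv_rhs => rw [← List.map_id K]
      exact List.map_congr_left (fun q hq => by simp [hred q hq])
    rw [hmapK]
    congr 1
    apply List.filter_eq_self.mpr
    intro q hq
    rw [decide_eq_true_eq]
    intro q' hq' hlbl hle
    have hkq : keep L q := by
      have := (List.mem_filter.mp hq).2
      rwa [decide_eq_true_eq] at this
    exact hkq q' (hmem q' hq') hlbl hle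

/-- Minimality condition on a children list. -/
def MinCond (cs : List (α × PreTree α)) : Prop :=
  ∀ q ∈ cs, ∀ q' ∈ cs, q'.1 = q.1 → le q'.2 q.2 → le q.2 q'.2

theorem reduced_node_iff {b : Bool} {cs : List (α × PreTree α)} :
    Reduced (node b cs) ↔ (∀ p ∈ cs, Reduced p.2) ∧ MinCond cs := by
  classical
  constructor
  · intro h
    rw [Reduced, reduce_node] at h
    set L := cs.map fun p => (p.1, reduce p.2) with hL
    have hcs : (L.filter fun q => decide (keep L q)) = cs := by
      injection h
    have hredc : ∀ p ∈ cs, Reduced p.2 := by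
      intro p hp
      rw [← hcs] at hp
      obtain ⟨q, _, rfl⟩ := List.mem_map.mp (List.mem_filter.mp hp).1
      exact reduce_reduce q.2
    have hLcs : L = cs := by
      rw [hL]
      conv_rhs => rw [← List.map_id cs]
      exact List.map_congr_left (fun p hp => by have h2 := hredc p hp; rw [Reduced] at h2; simp [h2])
    refine ⟨hredc, fun q hq q' hq' hlbl hle => ?_⟩
    rw [← hcs] at hq
    have := (List.mem_filter.mp hq).2
    rw [decide_eq_true_eq] at this
    exact this q' (by rw [hLcs]; exact hq') hlbl hle
  · rintro ⟨hredc, hmin⟩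
    rw [Reduced, reduce_node]
    have hLcs : (cs.map fun p => (p.1, reduce p.2)) = cs := by
      conv_rhs => rw [← List.map_id cs]
      exact List.map_congr_left (fun p hp => by have h2 := hredc p hp; rw [Reduced] at h2; simp [h2])
    rw [hLcs]
    congr 1
    apply List.filter_eq_self.mpr
    intro q hq
    rw [decide_eq_true_eq]
    exact fun q' hq' hlbl hle => hmin q hq q' hq' hlbl hle

theorem reduced_of_subset {b b' : Bool} {cs cs' : List (α × PreTree α)}
    (h : Reduced (node b cs)) (hsub : ∀ x ∈ cs', x ∈ cs) : Reduced (node b' cs') := by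
  obtain ⟨h1, h2⟩ := reduced_node_iff.mp h
  exact reduced_node_iff.mpr ⟨fun p hp => h1 p (hsub p hp),
    fun q hq q' hq' => h2 q (hsub q hq) q' (hsub q' hq')⟩

theorem reduced_nil {b : Bool} : Reduced (node b ([] : List (α × PreTree α))) :=
  reduced_node_iff.mpr ⟨by simp, by simp [MinCond]⟩

theorem reduced_singleton {a : α} {c : PreTree α} {b : Bool} (hc : Reduced c) :
    Reduced (node b [(a, c)]) := by
  refine reduced_node_iff.mpr ⟨by simpa using hc, ?_⟩
  intro q hq q' hq' hlbl hle
  simp only [List.mem_singleton] at hq hq'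
  subst hq; subst hq'
  exact hle

theorem markCount_trivial : markCount (node true ([] : List (α × PreTree α))) = 1 := by
  rw [markCount_node]; simp

theorem mark_false_of_mc_zero {t : PreTree α} (h : markCount t = 0) : t.mark = false := by
  obtain ⟨b, cs⟩ := t
  have := (mc_zero_children h).1
  simpa [mark]

theorem reduced_T0 {l₁ l₂ : List (α × PreTree α)} {a₀ : α} {c₀ : PreTree α}
    (hU : Reduced (node false (l₁ ++ (a₀, c₀) :: l₂)))
    (hm : ∀ x ∈ l₁ ++ l₂, markCount x.2 = 0)
    (hc₀ : c₀.children ≠ []) :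
    Reduced (node false (l₁ ++ (a₀, node true []) :: l₂)) := by
  obtain ⟨hredc, hmin⟩ := reduced_node_iff.mp hU
  have hmemold : ∀ x, x ∈ l₁ ++ l₂ → x ∈ l₁ ++ (a₀, c₀) :: l₂ := by
    intro x hx
    rcases List.mem_append.mp hx with h | h
    · exact List.mem_append.mpr (Or.inl h)
    · exact List.mem_append.mpr (Or.inr (List.mem_cons_of_mem _ h))
  have hmemnew : ∀ x, x ∈ l₁ ++ (a₀, node true []) :: l₂ →
      x ∈ l₁ ++ l₂ ∨ x = (a₀, node true []) := by
    intro x hx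
    rcases List.mem_append.mp hx with h | h
    · exact Or.inl (List.mem_append.mpr (Or.inl h))
    · rcases List.mem_cons.mp h with h | h
      · exact Or.inr h
      · exact Or.inl (List.mem_append.mpr (Or.inr h))
  refine reduced_node_iff.mpr ⟨?_, ?_⟩
  · intro p hp
    rcases hmemnew p hp with h | rfl
    · exact hredc p (hmemold p h)
    · exact reduced_nil
  · intro q hq q' hq' hlbl hle
    rcases hmemnew q hq with hqold | rfl
    · rcases hmemnew q' hq' with hq'old | rfl
      · exact hmin q (hmemold q hqold) q' (hmemold q' hq'old) hlbl hle
      · -- q' is the new leaf, q is an old child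
        exfalso
        obtain ⟨qa, qt⟩ := q
        obtain ⟨qb, qcs⟩ := qt
        simp only at hlbl hle ⊢
        have hqb : qb = false := by
          have := (mc_zero_children (hm _ hqold)).1
          exact this
        subst hqb
        have hqcs : qcs = [] := by
          rw [le] at hle
          cases qcs with
          | nil => rfl
          | cons r rs =>
            obtain ⟨p, hp, -⟩ := hle.2 r (List.mem_cons_self (a := r) (l := rs))
            exact absurd hp List.not_mem_nil
        subst hqcs
        have hlab : (a₀, c₀).1 = (qa, node false ([] : List (α × PreTree α))).1 := by
          simpa using hlbl
        obtain ⟨cb, ccs⟩ := c₀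
        have hle1 : le (node cb ccs) (node false ([] : List (α × PreTree α))) := by
          rw [le]
          exact ⟨by simp, by simp⟩
        have hle2 := hmin _ (hmemold _ hqold) (a₀, node cb ccs)
          (List.mem_append.mpr (Or.inr (List.mem_cons_self))) hlab hle1
        rw [le] at hle2
        simp only [children] at hc₀
        cases ccs with
        | nil => exact hc₀ rfl
        | cons r rs =>
          obtain ⟨p, hp, -⟩ := hle2.2 r (List.mem_cons_self (a := r) (l := rs))
          exact absurd hp List.not_mem_nil
    · rcases hmemnew q' hq' with hq'old | rfl
      · -- q is the leaf, q' old
        exfalso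
        obtain ⟨q'a, q't⟩ := q'
        obtain ⟨q'b, q'cs⟩ := q't
        have hq'b : q'b = false := (mc_zero_children (hm _ hq'old)).1
        simp only at hle
        rw [le] at hle
        have := hle.1 rfl
        simp [hq'b] at this
      · exact hle

end PreTree

namespace FreeKAD
open PreTree
variable {α : Type}

/-- `Gen t U`: the reduced pointed tree `U` is generated according to the term `t`. -/
def Gen : Term1 α → RPTree α → Prop
  | .var a, U => eqv U.1 (arrow a)
  | .one, U => eqv U.1 trivialTree
  | .comp s t, U => ∃ T S : RPTree α, Gen s T ∧ Gen t S ∧ eqv U.1 (concat T.1 S.1)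
  | .dom s, U => ∃ T : RPTree α, Gen s T ∧ eqv U.1 (domTree T.1)

theorem gen_sat {X : Type} (f : α → X → X → Prop) :
    ∀ (t : Term1 α) (U : RPTree α), Gen t U → ∀ x y,
      rinterp1 f t x y ↔ SatP f U.1 x (fun w => w = y) := by
  intro t
  induction t with
  | var a =>
    intro U hU x y
    rw [satP_eqv f U.1 (arrow a) hU, satP_arrow]
    simp [rinterp1]
  | one =>
    intro U hU x y
    rw [satP_eqv f U.1 trivialTree hU, trivialTree, satP_trivial]
    simp [rinterp1]
  | comp s t ihs iht =>
    rintro U ⟨T, S, hT, hS, he⟩ x y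
    rw [satP_eqv f U.1 _ he, concat, satP_reduce,
      satP_graft f S.1 T.1 (le_of_eq T.2.2) x,
      satP_point f T.1 T.2.2 x]
    simp only [rinterp1]
    constructor
    · rintro ⟨z, h1, h2⟩
      exact ⟨z, (ihs T hT x z).mp h1, (iht S hS z y).mp h2⟩
    · rintro ⟨z, h1, h2⟩
      exact ⟨z, (ihs T hT x z).mpr h1, (iht S hS z y).mpr h2⟩
  | dom s ihs =>
    rintro U ⟨T, hT, he⟩ x y
    rw [satP_eqv f U.1 _ he, domTree, satP_reduce,
      satP_pointAtRoot f T.1 T.2.2 x]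
    simp only [rinterp1]
    constructor
    · rintro ⟨h1, z, h2⟩
      exact ⟨h1, z, (ihs T hT x z).mp h2⟩
    · rintro ⟨h1, z, h2⟩
      exact ⟨h1, z, (ihs T hT x z).mpr h2⟩

end FreeKAD

namespace PreTree
variable {α : Type}

theorem sizeOf_append_lt {β : Type} [SizeOf β] :
    ∀ (l₁ l₂ : List β) (p : β), sizeOf (l₁ ++ l₂) < sizeOf (l₁ ++ p :: l₂) := by
  intro l₁ l₂ p
  induction l₁ with
  | nil => simp
  | cons a t ih => simp at ih ⊢; omega

theorem mc_list_zero {l : List (α × PreTree α)} (h : ∀ x ∈ l, markCount x.2 = 0) :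
    (l.map fun p => markCount p.2).sum = 0 := by
  apply List.sum_eq_zero
  intro x hx
  obtain ⟨p, hp, rfl⟩ := List.mem_map.mp hx
  exact h p hp

theorem markCount_node_true_zeros {l : List (α × PreTree α)}
    (h : ∀ x ∈ l, markCount x.2 = 0) : markCount (node true l) = 1 := by
  rw [markCount_node, mc_list_zero h]
  simp

theorem mc_split {b : Bool} {l₁ l₂ : List (α × PreTree α)} {p : α × PreTree α}
    (h : ∀ x ∈ l₁ ++ l₂, markCount x.2 = 0) :
    markCount (node b (l₁ ++ p :: l₂)) = (cond b 1 0) + markCount p.2 := by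
  rw [markCount_node, List.map_append, List.sum_append, List.map_cons, List.sum_cons]
  have h₁ : (l₁.map fun p => markCount p.2).sum = 0 :=
    mc_list_zero (fun x hx => h x (List.mem_append.mpr (Or.inl hx)))
  have h₂ : (l₂.map fun p => markCount p.2).sum = 0 :=
    mc_list_zero (fun x hx => h x (List.mem_append.mpr (Or.inr hx)))
  omega

theorem unmark_zeros {b : Bool} {l : List (α × PreTree α)}
    (h : ∀ x ∈ l, markCount x.2 = 0) : unmark (node b l) = node false l := by
  rw [unmark_node]
  congr 1
  conv_rhs => rw [← List.map_id l]
  exact List.map_congr_left (fun p hp => by simp [unmark_eq_self p.2 (h p hp)])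

theorem reduced_arrow (a : α) : Reduced (arrow a) := by
  rw [arrow]; exact reduced_singleton reduced_nil

theorem pointed_arrow (a : α) : Pointed (arrow a) := by
  rw [arrow, Pointed, markCount_node]
  simp [markCount_trivial]

end PreTree

namespace FreeKAD
open PreTree
variable {α : Type}

theorem gen_total : ∀ (n : ℕ) (T : PreTree α) (h1 : T.Reduced) (h2 : T.Pointed),
    sizeOf T ≤ n → ∃ t : Term1 α, Gen t (⟨T, h1, h2⟩ : RPTree α) := by
  intro n
  induction n with
  | zero =>
    rintro ⟨b, cs⟩ _ _ hsz
    exfalso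
    simp at hsz
  | succ n ih =>
    rintro ⟨b, cs⟩ h1 h2 hsz
    cases b with
    | true =>
      cases cs with
      | nil =>
        refine ⟨Term1.one, ?_⟩
        simp only [Gen, trivialTree]
        exact eqv_refl _
      | cons hd rest =>
        obtain ⟨a, c⟩ := hd
        have hch := pointed_node_true h2
        have hmc_c : markCount c = 0 := hch (a, c) (List.mem_cons_self)
        have hmrest : ∀ x ∈ rest, markCount x.2 = 0 :=
          fun x hx => hch x (List.mem_cons_of_mem _ hx)
        obtain ⟨hredch, _⟩ := reduced_node_iff.mp h1
        have hredc : Reduced c := hredch (a, c) (List.mem_cons_self)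
        obtain ⟨cb, cc⟩ := c
        have hcb : cb = false := (mc_zero_children hmc_c).1
        subst hcb
        have hcc0 : ∀ x ∈ cc, markCount x.2 = 0 := (mc_zero_children hmc_c).2
        have hredCC : Reduced (node true cc) := reduced_of_subset hredc (fun x hx => hx)
        have hptCC : Pointed (node true cc) := markCount_node_true_zeros hcc0
        have hsz1 : sizeOf (node true cc) ≤ n := by simp at hsz ⊢; omega
        obtain ⟨tcc, hgcc⟩ := ih (node true cc) hredCC hptCC hsz1
        have hredR : Reduced (node true rest) :=
          reduced_of_subset h1 (fun x hx => List.mem_cons_of_mem _ hx)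
        have hptR : Pointed (node true rest) := markCount_node_true_zeros hmrest
        have hsz2 : sizeOf (node true rest) ≤ n := by simp at hsz ⊢; omega
        obtain ⟨tr, hgr⟩ := ih (node true rest) hredR hptR hsz2
        -- W = node false [(a, node true cc)]
        have hredW : Reduced (node false [(a, node true cc)]) := reduced_singleton hredCC
        have hptW : Pointed (node false [(a, node true cc)]) := by
          rw [PreTree.Pointed, markCount_node]
          rw [PreTree.Pointed] at hptCC
          simp [hptCC]
        have hgenW : Gen (Term1.comp (Term1.var a) tcc)
            (⟨node false [(a, node true cc)], hredW, hptW⟩ : RPTree α) := by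
          simp only [Gen]
          refine ⟨⟨arrow a, reduced_arrow a, pointed_arrow a⟩,
            ⟨node true cc, hredCC, hptCC⟩, eqv_refl _, hgcc, ?_⟩
          have hg : graft (node true cc) (arrow a) = node false [(a, node true cc)] := by
            rw [arrow, graft_node_false]
            simp [graft_point]
          rw [concat, hg]
          rw [show reduce (node false [(a, node true cc)]) = node false [(a, node true cc)] from hredW]
          exact eqv_refl _
        -- T = node true [(a, node false cc)]
        have hredT : Reduced (node true [(a, node false cc)]) := reduced_singleton hredc
        have hptT : Pointed (node true [(a, node false cc)]) := by
          rw [PreTree.Pointed, markCount_node]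
          simp [hmc_c]
        have hgenT : Gen (Term1.dom (Term1.comp (Term1.var a) tcc))
            (⟨node true [(a, node false cc)], hredT, hptT⟩ : RPTree α) := by
          simp only [Gen]
          refine ⟨⟨node false [(a, node true cc)], hredW, hptW⟩, hgenW, ?_⟩
          have hu : unmark (node false [(a, node true cc)]) = node false [(a, node false cc)] := by
            rw [unmark_node]
            simp [unmark_zeros hcc0]
          rw [domTree, pointAtRoot, hu]
          show eqv _ (reduce (node true [(a, node false cc)]))
          rw [show reduce (node true [(a, node false cc)]) = node true [(a, node false cc)] from hredT]
          exact eqv_refl _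
        refine ⟨Term1.comp (Term1.dom (Term1.comp (Term1.var a) tcc)) tr, ?_⟩
        simp only [Gen]
        refine ⟨⟨node true [(a, node false cc)], hredT, hptT⟩,
          ⟨node true rest, hredR, hptR⟩, hgenT, hgr, ?_⟩
        have hg : graft (node true rest) (node true [(a, node false cc)]) =
            node true ((a, node false cc) :: rest) := by
          rw [graft_node_true]
          simp [mark, children]
        rw [concat, hg]
        rw [show reduce (node true ((a, node false cc) :: rest)) =
          node true ((a, node false cc) :: rest) from h1]
        exact eqv_refl _
    | false =>
      have h2' := h2
      rw [PreTree.Pointed, markCount_node] at h2'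
      simp only [cond_false, Nat.zero_add] at h2'
      obtain ⟨l₁, p₀, l₂, rfl, hp₀, hl₁, hl₂⟩ := sum_eq_one_split h2'
      obtain ⟨a₀, c₀⟩ := p₀
      have hm12 : ∀ x ∈ l₁ ++ l₂, markCount x.2 = 0 := by
        intro x hx
        rcases List.mem_append.mp hx with h | h
        exacts [hl₁ x h, hl₂ x h]
      have hmemold : ∀ x ∈ l₁ ++ l₂, x ∈ l₁ ++ (a₀, c₀) :: l₂ := by
        intro x hx
        rcases List.mem_append.mp hx with h | h
        · exact List.mem_append.mpr (Or.inl h)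
        · exact List.mem_append.mpr (Or.inr (List.mem_cons_of_mem _ h))
      obtain ⟨hredch, _⟩ := reduced_node_iff.mp h1
      have hmem₀ : (a₀, c₀) ∈ l₁ ++ (a₀, c₀) :: l₂ :=
        List.mem_append.mpr (Or.inr (List.mem_cons_self))
      have hredc₀ : Reduced c₀ := hredch _ hmem₀
      have hredT' : Reduced (node true (l₁ ++ l₂)) := reduced_of_subset h1 hmemold
      have hptT' : Pointed (node true (l₁ ++ l₂)) := markCount_node_true_zeros hm12
      have hszT' : sizeOf (node true (l₁ ++ l₂)) ≤ n := by
        have hlt := sizeOf_append_lt l₁ l₂ (a₀, c₀)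
        simp at hsz ⊢
        omega
      obtain ⟨t', hgt'⟩ := ih _ hredT' hptT' hszT'
      have hXmem : ∀ x : α × PreTree α,
          x ∈ (l₁ ++ l₂) ++ [(a₀, node true ([] : List (α × PreTree α)))] ↔
          x ∈ l₁ ++ (a₀, node true ([] : List (α × PreTree α))) :: l₂ := by
        intro x
        simp only [List.mem_append, List.mem_cons, List.mem_singleton]
        tauto
      obtain ⟨c₀b, c₀cs⟩ := c₀
      cases c₀cs with
      | nil =>
        have hc₀b : c₀b = true := by
          rw [markCount_node] at hp₀
          cases c₀b
          · simp at hp₀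
          · rfl
        subst hc₀b
        have hredX : Reduced (node false
            ((l₁ ++ l₂) ++ [(a₀, node true ([] : List (α × PreTree α)))])) :=
          reduced_of_subset h1 (fun x hx => (hXmem x).mp hx)
        refine ⟨Term1.comp t' (Term1.var a₀), ?_⟩
        simp only [Gen]
        refine ⟨⟨node true (l₁ ++ l₂), hredT', hptT'⟩,
          ⟨arrow a₀, reduced_arrow a₀, pointed_arrow a₀⟩, hgt', eqv_refl _, ?_⟩
        have hg : graft (arrow a₀) (node true (l₁ ++ l₂)) =
            node false ((l₁ ++ l₂) ++ [(a₀, node true [])]) := by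
          rw [graft_node_true, arrow]
          simp [mark, children]
        rw [concat, hg]
        rw [show reduce (node false ((l₁ ++ l₂) ++ [(a₀, node true [])])) =
          node false ((l₁ ++ l₂) ++ [(a₀, node true [])]) from hredX]
        exact eqv_of_mem_iff rfl (fun x => (hXmem x).symm)
      | cons r rs =>
        have hredT₀ : Reduced (node false (l₁ ++ (a₀, node true []) :: l₂)) :=
          reduced_T0 h1 hm12 (by simp [children])
        have hptT₀ : Pointed (node false (l₁ ++ (a₀, node true []) :: l₂)) := by
          rw [PreTree.Pointed, mc_split hm12]
          simp [markCount_trivial]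
        have hredX : Reduced (node false
            ((l₁ ++ l₂) ++ [(a₀, node true ([] : List (α × PreTree α)))])) :=
          reduced_of_subset hredT₀ (by
            intro x hx
            have := (hXmem x).mp hx
            exact this)
        have hgenT₀ : Gen (Term1.comp t' (Term1.var a₀))
            (⟨node false (l₁ ++ (a₀, node true []) :: l₂), hredT₀, hptT₀⟩ : RPTree α) := by
          simp only [Gen]
          refine ⟨⟨node true (l₁ ++ l₂), hredT', hptT'⟩,
            ⟨arrow a₀, reduced_arrow a₀, pointed_arrow a₀⟩, hgt', eqv_refl _, ?_⟩
          have hg : graft (arrow a₀) (node true (l₁ ++ l₂)) =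
              node false ((l₁ ++ l₂) ++ [(a₀, node true [])]) := by
            rw [graft_node_true, arrow]
            simp [mark, children]
          rw [concat, hg]
          rw [show reduce (node false ((l₁ ++ l₂) ++ [(a₀, node true [])])) =
            node false ((l₁ ++ l₂) ++ [(a₀, node true [])]) from hredX]
          exact eqv_of_mem_iff rfl (fun x => (hXmem x).symm)
        have hszc₀ : sizeOf (node c₀b (r :: rs)) ≤ n := by
          have hlt := List.sizeOf_lt_of_mem hmem₀
          simp at hlt hsz ⊢
          omega
        obtain ⟨tc, hgtc⟩ := ih _ hredc₀ hp₀ hszc₀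
        refine ⟨Term1.comp (Term1.comp t' (Term1.var a₀)) tc, ?_⟩
        simp only [Gen]
        refine ⟨⟨node false (l₁ ++ (a₀, node true []) :: l₂), hredT₀, hptT₀⟩,
          ⟨node c₀b (r :: rs), hredc₀, hp₀⟩, hgenT₀, hgtc, ?_⟩
        have hg : graft (node c₀b (r :: rs)) (node false (l₁ ++ (a₀, node true []) :: l₂)) =
            node false (l₁ ++ (a₀, node c₀b (r :: rs)) :: l₂) := by
          rw [graft_node_false, List.map_append, List.map_cons]
          have hmap : ∀ l : List (α × PreTree α), (∀ x ∈ l, markCount x.2 = 0) →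
              (l.map fun p => (p.1, graft (node c₀b (r :: rs)) p.2)) = l := by
            intro l hl
            conv_rhs => rw [← List.map_id l]
            exact List.map_congr_left (fun p hp => by
              simp [graft_eq_self (node c₀b (r :: rs)) p.2 (hl p hp)])
          rw [hmap l₁ (fun x hx => hm12 x (List.mem_append.mpr (Or.inl hx))),
            hmap l₂ (fun x hx => hm12 x (List.mem_append.mpr (Or.inr hx)))]
          simp [graft_point]
        rw [concat, hg]
        rw [show reduce (node false (l₁ ++ (a₀, node c₀b (r :: rs)) :: l₂)) =
          node false (l₁ ++ (a₀, node c₀b (r :: rs)) :: l₂) from h1]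
        exact eqv_refl _

end FreeKAD


namespace FreeKAD
open PreTree

/-- The reduced pointed `Σ`-labelled rooted trees, with
pointed tree concatenation, the domain operation, and the trivial tree, form
the free algebra over `Σ` for the class of `{∘, 1, D}`-algebras of binary
relations: for every set `X`, every set `A` of binary relations on `X`
containing the identity relation and closed under composition and domain,
and every `g : Σ → A`, there is a unique map `h` from the reduced pointed
trees to `A` with `h(→a) = g a`, `h(trivial) = identity`,
`h(T ∘ S) = h T ∘ h S` and `h(D T) = D(h T)`.  (Trees are compared with
`eqv`, equality of trees whose children collections are sets.) -/
theorem free_algebra_comp_one_dom {α X : Type} (A : Set (X → X → Prop))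
    (hid : relId ∈ A)
    (hcomp : ∀ R ∈ A, ∀ S ∈ A, relComp R S ∈ A)
    (hdom : ∀ R ∈ A, relDom R ∈ A)
    (g : α → X → X → Prop) (hg : ∀ a, g a ∈ A) :
    ∃! h : RPTree α → (X → X → Prop),
      (∀ T, h T ∈ A) ∧
      (∀ (a : α) (U : RPTree α), eqv U.1 (arrow a) → h U = g a) ∧
      (∀ U : RPTree α, eqv U.1 trivialTree → h U = relId) ∧
      (∀ T S U : RPTree α, eqv U.1 (concat T.1 S.1) →
          h U = relComp (h T) (h S)) ∧
      (∀ T U : RPTree α, eqv U.1 (domTree T.1) → h U = relDom (h T)) := by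
  classical
  have total : ∀ U : RPTree α, ∃ t : Term1 α, Gen t U := by
    rintro ⟨T, hred, hpt⟩
    exact gen_total (sizeOf T) T hred hpt (Nat.le_refl _)
  choose term hterm using total
  set h : RPTree α → (X → X → Prop) := fun U => rinterp1 g (term U) with hdef
  have hA : ∀ t : Term1 α, rinterp1 g t ∈ A := by
    intro t
    induction t with
    | var a => exact hg a
    | one => exact hid
    | comp s t ihs iht => exact hcomp _ ihs _ iht
    | dom s ihs => exact hdom _ ihs
  have hSat : ∀ U : RPTree α, h U = fun x y => SatP g U.1 x (fun w => w = y) := by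
    intro U
    funext x y
    exact propext (gen_sat g (term U) U (hterm U) x y)
  have keyArrow : ∀ (a : α) (U : RPTree α), eqv U.1 (arrow a) → h U = g a := by
    intro a U he
    rw [hSat U]
    funext x y
    apply propext
    rw [satP_eqv g U.1 _ he, satP_arrow]
    constructor
    · rintro ⟨z, hz, rfl⟩; exact hz
    · intro hz; exact ⟨y, hz, rfl⟩
  have keyOne : ∀ U : RPTree α, eqv U.1 trivialTree → h U = relId := by
    intro U he
    rw [hSat U]
    funext x y
    apply propext
    rw [satP_eqv g U.1 _ he, trivialTree, satP_trivial]
    exact Iff.rfl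
  have keyComp : ∀ T S U : RPTree α, eqv U.1 (concat T.1 S.1) →
      h U = relComp (h T) (h S) := by
    intro T S U he
    rw [hSat U, hSat T, hSat S]
    funext x y
    apply propext
    rw [satP_eqv g U.1 _ he, concat, satP_reduce,
      satP_graft g S.1 T.1 (le_of_eq T.2.2) x, satP_point g T.1 T.2.2 x]
    exact Iff.rfl
  have keyDom : ∀ T U : RPTree α, eqv U.1 (domTree T.1) → h U = relDom (h T) := by
    intro T U he
    rw [hSat U, hSat T]
    funext x y
    apply propext
    rw [satP_eqv g U.1 _ he, domTree, satP_reduce,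
      satP_pointAtRoot g T.1 T.2.2 x]
    exact Iff.rfl
  refine ⟨h, ⟨fun U => hA (term U), keyArrow, keyOne, keyComp, keyDom⟩, ?_⟩
  rintro h' ⟨h'A, h'arrow, h'one, h'comp, h'dom⟩
  have huniq : ∀ (t : Term1 α) (U : RPTree α), Gen t U → h' U = rinterp1 g t := by
    intro t
    induction t with
    | var a => intro U hU; rw [h'arrow a U hU]; rfl
    | one => intro U hU; rw [h'one U hU]; rfl
    | comp s t ihs iht =>
      rintro U ⟨T, S, hT, hS, he⟩
      rw [h'comp T S U he, ihs T hT, iht S hS]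
      rfl
    | dom s ihs =>
      rintro U ⟨T, hT, he⟩
      rw [h'dom T U he, ihs T hT]
      rfl
  funext U
  rw [huniq (term U) U (hterm U)]


end FreeKAD
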